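/- Let ℓ ≥ 3 be an odd integer, and for each n let δ_di(ℓ, n) denote the smallest integer d such that every digraph on n vertices with minimum semidegree at least d contains an ℓ-cycle. Then δ_di(ℓ, n)/n tends to 1/2 as n tends to infinity. -/

import Mathlib

/-- An oriented graph: a digraph (relation) with no loops and no pair of
antiparallel edges. -/
def IsOrientedGraph {V : Type*} (E : V → V → Prop) : Prop :=
  ∀ x y, E x y → ¬ E y x

/-- The outdegree `d⁺(x)` of a vertex. -/
noncomputable def outDeg {V : Type*} (E : V → V → Prop) (x : V) : ℕ :=
  Nat.card {y // E x y}

/-- The indegree `d⁻(x)` of a vertex. -/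
noncomputable def inDeg {V : Type*} (E : V → V → Prop) (x : V) : ℕ :=
  Nat.card {y // E y x}

/-- The minimum semidegree `δ⁰(G) = min over x of min (d⁺(x), d⁻(x))`. -/
noncomputable def minSemidegree {V : Type*} (E : V → V → Prop) : ℕ :=
  sInf (Set.range fun x => min (outDeg E x) (inDeg E x))

/-- The minimum outdegree `δ⁺(G)`. -/
noncomputable def minOutdegree {V : Type*} (E : V → V → Prop) : ℕ :=
  sInf (Set.range fun x => outDeg E x)

/-- `G` contains a directed cycle of length `ℓ`: distinct vertices
`v₀, …, v_{ℓ-1}` (indexed cyclically) with all consecutive edges present. -/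
def HasCycle {V : Type*} (E : V → V → Prop) (ℓ : ℕ) : Prop :=
  ∃ v : ZMod ℓ → V, Function.Injective v ∧ ∀ i, E (v i) (v (i + 1))

/-- `G` contains a directed `ℓ`-cycle through the vertex `u`. -/
def HasCycleThrough {V : Type*} (E : V → V → Prop) (ℓ : ℕ) (u : V) : Prop :=
  ∃ v : ZMod ℓ → V, Function.Injective v ∧ (∀ i, E (v i) (v (i + 1))) ∧ ∃ i, v i = u

/-- `δ_di(ℓ, n)`: the smallest `d` such that every digraph (loopless relation)
on `n` vertices with minimum semidegree at least `d` contains an `ℓ`-cycle. -/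
noncomputable def deltaDi (ℓ n : ℕ) : ℕ :=
  sInf {d : ℕ | ∀ E : Fin n → Fin n → Prop, (∀ x, ¬ E x x) →
    d ≤ minSemidegree E → HasCycle E ℓ}

lemma exists_path {n d : ℕ} (E : Fin n → Fin n → Prop)
    (hdeg : ∀ x : Fin n, d ≤ outDeg E x) (hn : 0 < n) :
    ∀ m, m ≤ d → ∃ w : ℕ → Fin n,
      (∀ i j, i < m → j < m → w i = w j → i = j) ∧
      (∀ i, i + 1 < m → E (w i) (w (i + 1))) := by
  intro m
  induction m with
  | zero => intro _; exact ⟨fun _ => ⟨0, hn⟩, by omega, by omega⟩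
  | succ m ih =>
    intro hm
    obtain ⟨w, hinj, hedge⟩ := ih (by omega)
    match m, hinj, hedge with
    | 0, hinj, hedge =>
      exact ⟨w, by omega, by omega⟩
    | s + 1, hinj, hedge =>
      set x := w s with hx
      have hS : d ≤ Set.ncard {y | E x y} := by
        rw [← Nat.card_coe_set_eq]; exact hdeg x
      set used : Finset (Fin n) := (Finset.range (s + 1)).image w with hused
      have hcard : (↑used : Set (Fin n)).ncard < Set.ncard {y | E x y} := by
        rw [Set.ncard_coe_finset]
        have : used.card ≤ s + 1 := le_trans (Finset.card_image_le) (by simp)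
        omega
      obtain ⟨y, hyS, hyT⟩ := Set.exists_mem_notMem_of_ncard_lt_ncard hcard
      have hynot : ∀ i, i < s + 1 → w i ≠ y := by
        intro i hi he
        exact hyT (by simp only [hused, Finset.coe_image]; exact ⟨i, by simpa using hi, he⟩)
      refine ⟨Function.update w (s + 1) y, ?_, ?_⟩
      · intro i j hi hj heq
        rcases eq_or_ne i (s+1) with rfl | hi' <;> rcases eq_or_ne j (s+1) with rfl | hj'
        · rfl
        · rw [Function.update_self, Function.update_of_ne hj'] at heq
          exact absurd heq.symm (hynot j (by omega))
        · rw [Function.update_self, Function.update_of_ne hi'] at heq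
          exact absurd heq (hynot i (by omega))
        · rw [Function.update_of_ne hi', Function.update_of_ne hj'] at heq
          exact hinj i j (by omega) (by omega) heq
      · intro i hi
        rcases eq_or_ne (i+1) (s+1) with he | hne
        · rw [Function.update_of_ne (by omega), he, Function.update_self]
          have : i = s := by omega
          subst this
          exact hyS
        · rw [Function.update_of_ne (by omega), Function.update_of_ne hne]
          exact hedge i (by omega)

lemma upper_mem {ℓ n : ℕ} (hℓ : 3 ≤ ℓ) :
    ∀ E : Fin n → Fin n → Prop, (∀ x, ¬ E x x) →
      n / 2 + ℓ + 1 ≤ minSemidegree E → HasCycle E ℓ := by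
  intro E hloop hmin
  set d := n / 2 + ℓ + 1 with hd
  rcases Nat.eq_zero_or_pos n with rfl | hn
  · exfalso
    have : minSemidegree E = 0 := by
      simp [minSemidegree, Set.range_eq_empty]
    omega
  have hkey : ∀ x : Fin n, d ≤ outDeg E x ∧ d ≤ inDeg E x := by
    intro x
    have h1 : minSemidegree E ≤ min (outDeg E x) (inDeg E x) := Nat.sInf_le ⟨x, rfl⟩
    exact ⟨hmin.trans (h1.trans (min_le_left _ _)), hmin.trans (h1.trans (min_le_right _ _))⟩
  obtain ⟨w, hinj, hedge⟩ :=
    exists_path E (fun x => (hkey x).1) hn (ℓ - 1) (by omega)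
  -- find the closing vertex z
  set A : Set (Fin n) := {y | E (w (ℓ - 2)) y} with hA
  set B : Set (Fin n) := {y | E y (w 0)} with hB
  have hAc : d ≤ A.ncard := by
    rw [← Nat.card_coe_set_eq]; exact (hkey (w (ℓ - 2))).1
  have hBc : d ≤ B.ncard := by
    rw [← Nat.card_coe_set_eq]; exact (hkey (w 0)).2
  have hunion : (A ∪ B).ncard ≤ n := by
    have h1 : (A ∪ B).ncard ≤ (Set.univ : Set (Fin n)).ncard :=
      Set.ncard_le_ncard (Set.subset_univ _) (Set.toFinite _)
    simpa [Set.ncard_univ] using h1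
  have hinter : 2 * ℓ + 1 ≤ (A ∩ B).ncard := by
    have := Set.ncard_union_add_ncard_inter A B
    omega
  set used : Finset (Fin n) := (Finset.range (ℓ - 1)).image w with hused
  have hcard : (↑used : Set (Fin n)).ncard < (A ∩ B).ncard := by
    rw [Set.ncard_coe_finset]
    have : used.card ≤ ℓ - 1 := le_trans (Finset.card_image_le) (by simp)
    omega
  obtain ⟨z, hz, hzT⟩ := Set.exists_mem_notMem_of_ncard_lt_ncard hcard
  have hz1 : E (w (ℓ - 2)) z := hz.1
  have hz2 : E z (w 0) := hz.2
  have hznot : ∀ i, i < ℓ - 1 → w i ≠ z := by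
    intro i hi he
    exact hzT (by simp only [hused, Finset.coe_image]; exact ⟨i, by simpa using hi, he⟩)
  haveI : NeZero ℓ := ⟨by omega⟩
  haveI : Fact (1 < ℓ) := ⟨by omega⟩
  refine ⟨fun i => if i.val = ℓ - 1 then z else w i.val, ?_, ?_⟩
  · intro a b hab
    apply ZMod.val_injective ℓ
    have ha := ZMod.val_lt a
    have hb := ZMod.val_lt b
    dsimp only at hab
    rcases eq_or_ne a.val (ℓ - 1) with ha' | ha' <;>
      rcases eq_or_ne b.val (ℓ - 1) with hb' | hb'
    · omega
    · rw [if_pos ha', if_neg hb'] at hab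
      exact absurd hab.symm (hznot b.val (by omega))
    · rw [if_neg ha', if_pos hb'] at hab
      exact absurd hab (hznot a.val (by omega))
    · rw [if_neg ha', if_neg hb'] at hab
      exact hinj a.val b.val (by omega) (by omega) hab
  · intro i
    have hval : (i + 1).val = (i.val + 1) % ℓ := by
      rw [ZMod.val_add, ZMod.val_one]
    have hlt := ZMod.val_lt i
    dsimp only
    rcases eq_or_ne i.val (ℓ - 1) with hi | hi
    · have h0 : (i + 1).val = 0 := by
        rw [hval, hi]
        have he : ℓ - 1 + 1 = ℓ := by omega
        rw [he, Nat.mod_self]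
      rw [if_pos hi, h0, if_neg (by omega)]
      exact hz2
    · rcases eq_or_ne i.val (ℓ - 2) with hi2 | hi2
      · have h1 : (i + 1).val = ℓ - 1 := by
          rw [hval, hi2, Nat.mod_eq_of_lt (by omega)]; omega
        rw [if_neg hi, if_pos h1, hi2]
        exact hz1
      · have h1 : (i + 1).val = i.val + 1 := by
          rw [hval, Nat.mod_eq_of_lt (by omega)]
        rw [if_neg hi, h1, if_neg (by omega)]
        exact hedge i.val (by omega)

lemma bipartite_example (n ℓ : ℕ) (hℓ : 3 ≤ ℓ) (hodd : Odd ℓ) :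
    ∃ E : Fin n → Fin n → Prop, (∀ x, ¬ E x x) ∧ n / 2 ≤ minSemidegree E ∧
      ¬ HasCycle E ℓ := by
  refine ⟨fun x y => ((x : ℕ) < n / 2 ↔ ¬ ((y : ℕ) < n / 2)), fun x => by tauto, ?_, ?_⟩
  · -- semidegree bound
    have hout : ∀ x : Fin n, n / 2 ≤ outDeg (fun x y : Fin n =>
        ((x : ℕ) < n / 2 ↔ ¬ ((y : ℕ) < n / 2))) x := by
      intro x
      by_cases hx : (x : ℕ) < n / 2
      · have hf : Function.Injective (fun j : Fin (n - n / 2) =>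
            (⟨⟨(j : ℕ) + n / 2, by have := j.2; omega⟩,
              by have := j.2; simp only []; omega⟩ :
              {y : Fin n // ((x : ℕ) < n / 2 ↔ ¬ ((y : ℕ) < n / 2))})) := by
          intro a b hab
          simp only [Subtype.mk.injEq, Fin.mk.injEq] at hab
          exact Fin.ext (by omega)
        have h2 := Nat.card_le_card_of_injective _ hf
        simp only [Nat.card_eq_fintype_card, Fintype.card_fin] at h2
        calc n / 2 ≤ n - n / 2 := by omega
          _ ≤ _ := by unfold outDeg; rw [Nat.card_eq_fintype_card]; exact h2
      · have hf : Function.Injective (fun j : Fin (n / 2) =>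
            (⟨⟨(j : ℕ), by have := j.2; have := x.2; omega⟩,
              by have := j.2; simp only []; omega⟩ :
              {y : Fin n // ((x : ℕ) < n / 2 ↔ ¬ ((y : ℕ) < n / 2))})) := by
          intro a b hab
          simp only [Subtype.mk.injEq, Fin.mk.injEq] at hab
          exact Fin.ext (by omega)
        have h2 := Nat.card_le_card_of_injective _ hf
        simp only [Nat.card_eq_fintype_card, Fintype.card_fin] at h2
        unfold outDeg; rw [Nat.card_eq_fintype_card]; exact h2
    have hin : ∀ x : Fin n, n / 2 ≤ inDeg (fun x y : Fin n =>
        ((x : ℕ) < n / 2 ↔ ¬ ((y : ℕ) < n / 2))) x := by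
      intro x
      have he : inDeg (fun x y : Fin n => ((x : ℕ) < n / 2 ↔ ¬ ((y : ℕ) < n / 2))) x
          = outDeg (fun x y : Fin n => ((x : ℕ) < n / 2 ↔ ¬ ((y : ℕ) < n / 2))) x := by
        unfold inDeg outDeg
        exact Nat.card_congr (Equiv.subtypeEquivRight (fun y => by tauto))
      rw [he]; exact hout x
    rcases Nat.eq_zero_or_pos n with rfl | hn
    · simp
    · haveI : Nonempty (Fin n) := ⟨⟨0, hn⟩⟩
      apply le_csInf (Set.range_nonempty _)
      rintro b ⟨x, rfl⟩
      exact le_min (hout x) (hin x)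
  · -- no odd cycle
    rintro ⟨v, -, hedge⟩
    haveI : NeZero ℓ := ⟨by omega⟩
    set g : ℕ → Prop := fun k => ((v (k : ZMod ℓ) : Fin n) : ℕ) < n / 2 with hg
    have hstep : ∀ k, g k ↔ ¬ g (k + 1) := by
      intro k
      have h := hedge (k : ZMod ℓ)
      have hc : ((k : ZMod ℓ) + 1) = ((k + 1 : ℕ) : ZMod ℓ) := by push_cast; ring
      rw [hc] at h
      exact h
    have hiter : ∀ k, ((g k ↔ g 0) ↔ Even k) := by
      intro k
      induction k with
      | zero => simp
      | succ k ih =>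
        have h := hstep k
        have he : Even (k + 1) ↔ ¬ Even k := Nat.even_add_one
        tauto
    have h0 : g ℓ ↔ g 0 := by
      have hv : ((ℓ : ℕ) : ZMod ℓ) = ((0 : ℕ) : ZMod ℓ) := by
        rw [ZMod.natCast_self, Nat.cast_zero]
      simp only [hg]
      rw [hv]
    have := (hiter ℓ).mp h0
    exact (Nat.not_even_iff_odd.mpr hodd) this

theorem digraph_min_degree_odd (ℓ : ℕ) (hℓ : 3 ≤ ℓ) (hodd : Odd ℓ) :
    Filter.Tendsto (fun n => (deltaDi ℓ n : ℝ) / n) Filter.atTop (nhds (1 / 2)) := by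
  have hup : ∀ n, deltaDi ℓ n ≤ n / 2 + ℓ + 1 := fun n =>
    Nat.sInf_le (upper_mem hℓ)
  have hlow : ∀ n, n / 2 + 1 ≤ deltaDi ℓ n := by
    intro n
    obtain ⟨E, hloop, hsemi, hnc⟩ := bipartite_example n ℓ hℓ hodd
    by_contra h
    push_neg at h
    have hmem : deltaDi ℓ n ∈ {d : ℕ | ∀ E : Fin n → Fin n → Prop, (∀ x, ¬ E x x) →
        d ≤ minSemidegree E → HasCycle E ℓ} :=
      Nat.sInf_mem ⟨n / 2 + ℓ + 1, upper_mem hℓ⟩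
    exact hnc (hmem E hloop (le_trans (by omega) hsemi))
  have htop : Filter.Tendsto (fun n : ℕ => (1 : ℝ) / 2 + (ℓ + 1) * (1 / n))
      Filter.atTop (nhds (1 / 2)) := by
    have := (tendsto_one_div_atTop_nhds_zero_nat.const_mul ((ℓ : ℝ) + 1)).const_add
      ((1 : ℝ) / 2)
    simpa using this
  refine tendsto_of_tendsto_of_tendsto_of_le_of_le' tendsto_const_nhds htop ?_ ?_
  · filter_upwards [Filter.eventually_gt_atTop 0] with n hn
    have hnr : (0 : ℝ) < n := by exact_mod_cast hn
    rw [le_div_iff₀ hnr]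
    have h2 : (n : ℝ) ≤ 2 * (deltaDi ℓ n : ℝ) := by
      have : n ≤ 2 * deltaDi ℓ n := by have := hlow n; omega
      exact_mod_cast this
    linarith
  · filter_upwards [Filter.eventually_gt_atTop 0] with n hn
    have hnr : (0 : ℝ) < n := by exact_mod_cast hn
    rw [div_le_iff₀ hnr]
    have h2 : 2 * (deltaDi ℓ n : ℝ) ≤ (n : ℝ) + 2 * ℓ + 2 := by
      have : 2 * deltaDi ℓ n ≤ n + 2 * ℓ + 2 := by have := hup n; omega
      exact_mod_cast this
    have hne : (n : ℝ) ≠ 0 := ne_of_gt hnr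
    have hexp : ((1 : ℝ) / 2 + (ℓ + 1) * (1 / n)) * n = n / 2 + (ℓ + 1) := by
      field_simp
    rw [hexp]
    linarith
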